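/- Every 4-cycle of $K_6$ is a subgraph of exactly two of the 10 complete bipartite subgraphs $K_{3,3}$ of $K_6$, and also a subgraph of exactly two of the 6 complete subgraphs $K_5$ of $K_6$. -/

import Mathlib

open SimpleGraph

/-- `E` is the edge set of a `k`-cycle in the complete graph on `Fin n`. -/
def IsCycleEdgeSet (n k : ℕ) [NeZero k] (E : Finset (Sym2 (Fin n))) : Prop :=
  3 ≤ k ∧ ∃ f : Fin k ↪ Fin n,
    E = Finset.image (fun i => s(f i, f (i + 1))) Finset.univ

namespace K6Aux

abbrev G : SimpleGraph (Fin 6) := completeGraph (Fin 6)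

/-- The complete bipartite subgraph with parts `s`, `sᶜ`. -/
def Bsub (s : Finset (Fin 6)) : G.Subgraph where
  verts := Set.univ
  Adj x y := (x ∈ s ∧ y ∉ s) ∨ (x ∉ s ∧ y ∈ s)
  adj_sub := by
    rintro x y (⟨h1, h2⟩ | ⟨h1, h2⟩) <;> rintro rfl <;> first | exact h2 h1 | exact h1 h2
  edge_vert := fun _ => Set.mem_univ _
  symm := ⟨by rintro x y (⟨h1, h2⟩ | ⟨h1, h2⟩); exacts [Or.inr ⟨h2, h1⟩, Or.inl ⟨h2, h1⟩]⟩

/-- The complete subgraph on the complement of `{v}`. -/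
def Csub (v : Fin 6) : G.Subgraph where
  verts := {v}ᶜ
  Adj x y := x ≠ y ∧ x ≠ v ∧ y ≠ v
  adj_sub := fun h => h.1
  edge_vert := fun h => h.2.1
  symm := ⟨by rintro x y ⟨h, h1, h2⟩; exact ⟨h.symm, h2, h1⟩⟩

lemma bsub_compl (s : Finset (Fin 6)) : Bsub sᶜ = Bsub s := by
  refine Subgraph.ext rfl ?_
  funext x y
  simp only [Bsub, Finset.mem_compl, not_not, eq_iff_iff]
  tauto

lemma csub_iso (v : Fin 6) : Nonempty ((Csub v).coe ≃g completeGraph (Fin 5)) := by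
  have hcard : Fintype.card (({v}ᶜ : Set (Fin 6))) = 5 := by
    rw [Fintype.card_compl_set]
    simp
  let e : (({v}ᶜ : Set (Fin 6))) ≃ Fin 5 := Fintype.equivFinOfCardEq hcard
  refine ⟨⟨e, fun {u w} => ?_⟩⟩
  show e u ≠ e w ↔ (Csub v).coe.Adj u w
  rw [Subgraph.coe_adj]
  constructor
  · intro h
    refine ⟨Subtype.coe_ne_coe.mpr (fun huw => h (congrArg e huw)), u.2, w.2⟩
  · rintro ⟨h1, -, -⟩
    exact e.injective.ne (Subtype.coe_ne_coe.mp h1)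

lemma isLeft_sumCompl {α : Type*} (p : α → Prop) [DecidablePred p] (z : α) :
    (((Equiv.sumCompl p).symm z).isLeft = true) ↔ p z := by
  by_cases h : p z
  · rw [Equiv.sumCompl_symm_apply_of_pos h]; simpa
  · rw [Equiv.sumCompl_symm_apply_of_neg h]; simpa

lemma isRight_sumCompl {α : Type*} (p : α → Prop) [DecidablePred p] (z : α) :
    (((Equiv.sumCompl p).symm z).isRight = true) ↔ ¬ p z := by
  by_cases h : p z
  · rw [Equiv.sumCompl_symm_apply_of_pos h]; simpa
  · rw [Equiv.sumCompl_symm_apply_of_neg h]; simpa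

lemma bsub_iso (s : Finset (Fin 6)) (hs : s.card = 3) :
    Nonempty ((Bsub s).coe ≃g completeBipartiteGraph (Fin 3) (Fin 3)) := by
  have hsc : sᶜ.card = 3 := by rw [Finset.card_compl, hs]; rfl
  let eL : {x : Fin 6 // x ∈ s} ≃ Fin 3 := s.equivFin.trans (finCongr hs)
  let eR : {x : Fin 6 // ¬ x ∈ s} ≃ Fin 3 :=
    (Equiv.subtypeEquivRight (fun x => (Finset.mem_compl).symm)).trans
      (sᶜ.equivFin.trans (finCongr hsc))
  let e : ↥(Bsub s).verts ≃ Fin 3 ⊕ Fin 3 :=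
    (Equiv.Set.univ (Fin 6)).trans ((Equiv.sumCompl (· ∈ s)).symm.trans (Equiv.sumCongr eL eR))
  have hcongrL : ∀ y : {x : Fin 6 // x ∈ s} ⊕ {x : Fin 6 // ¬ x ∈ s},
      ((Equiv.sumCongr eL eR) y).isLeft = y.isLeft := by rintro (y | y) <;> rfl
  have hcongrR : ∀ y : {x : Fin 6 // x ∈ s} ⊕ {x : Fin 6 // ¬ x ∈ s},
      ((Equiv.sumCongr eL eR) y).isRight = y.isRight := by rintro (y | y) <;> rfl
  have hL : ∀ u : ↥(Bsub s).verts, (e u).isLeft = true ↔ (u : Fin 6) ∈ s := by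
    intro u
    simp only [e, Equiv.trans_apply, hcongrL, isLeft_sumCompl]
    show (Equiv.sumCongr eL eR ((Equiv.sumCompl (· ∈ s)).symm (u : Fin 6))).isLeft = true ↔ _
    rw [hcongrL, isLeft_sumCompl]
  have hR : ∀ u : ↥(Bsub s).verts, (e u).isRight = true ↔ ¬ (u : Fin 6) ∈ s := by
    intro u
    simp only [e, Equiv.trans_apply, hcongrR, isRight_sumCompl]
    show (Equiv.sumCongr eL eR ((Equiv.sumCompl (· ∈ s)).symm (u : Fin 6))).isRight = true ↔ _
    rw [hcongrR, isRight_sumCompl]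
  refine ⟨⟨e, fun {u w} => ?_⟩⟩
  show (e u).isLeft = true ∧ (e w).isRight = true ∨ (e u).isRight = true ∧ (e w).isLeft = true ↔
    (Bsub s).coe.Adj u w
  rw [Subgraph.coe_adj, hL, hR, hR, hL]
  rfl

lemma bchar (H : G.Subgraph) (φ : H.coe ≃g completeBipartiteGraph (Fin 3) (Fin 3)) :
    ∃ s : Finset (Fin 6), s.card = 3 ∧ H = Bsub s := by
  have h6 : Nat.card ↥H.verts = 6 := by
    rw [Nat.card_congr φ.toEquiv]; simp
  have hverts : H.verts = Set.univ := by
    apply Set.eq_of_subset_of_ncard_le (Set.subset_univ _)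
    rw [Set.ncard_univ, ← Nat.card_coe_set_eq, h6]
    simp
  have hmem : ∀ x : Fin 6, x ∈ H.verts := by rw [hverts]; exact fun x => Set.mem_univ x
  set ψ : Fin 6 → Fin 3 ⊕ Fin 3 := fun x => φ ⟨x, hmem x⟩ with hψ
  have hψinj : Function.Injective ψ := by
    intro x y hxy
    exact congrArg Subtype.val (φ.toEquiv.injective hxy)
  have hψsurj : Function.Surjective ψ := by
    intro y
    obtain ⟨u, hu⟩ := φ.toEquiv.surjective y
    exact ⟨u.1, by rw [hψ]; simpa using hu⟩
  have hAdj : ∀ x y : Fin 6, H.Adj x y ↔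
      ((ψ x).isLeft = true ∧ (ψ y).isRight = true ∨ (ψ x).isRight = true ∧ (ψ y).isLeft = true) := by
    intro x y
    rw [← Subgraph.coe_adj H ⟨x, hmem x⟩ ⟨y, hmem y⟩, ← φ.map_rel_iff]
    rfl
  refine ⟨Finset.filter (fun x => (ψ x).isLeft = true) Finset.univ, ?_, ?_⟩
  · refine (Finset.card_bij (fun x _ => ψ x)
      (t := Finset.filter (fun y : Fin 3 ⊕ Fin 3 => y.isLeft = true) Finset.univ)
      (fun x hx => Finset.mem_filter.mpr ⟨Finset.mem_univ _, (Finset.mem_filter.mp hx).2⟩)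
      (fun x _ y _ h => hψinj h)
      (fun y hy => by
        obtain ⟨x, hx⟩ := hψsurj y
        exact ⟨x, Finset.mem_filter.mpr ⟨Finset.mem_univ _, by rw [hx]; exact (Finset.mem_filter.mp hy).2⟩, hx⟩)).trans (by decide)
  · refine Subgraph.ext hverts ?_
    funext x y
    rw [eq_iff_iff, hAdj]
    simp only [Bsub, Finset.mem_filter, Finset.mem_univ, true_and]
    cases ψ x <;> cases ψ y <;> simp

lemma cchar (H : G.Subgraph) (φ : H.coe ≃g completeGraph (Fin 5)) :
    ∃ v : Fin 6, H = Csub v := by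
  have h5 : H.verts.ncard = 5 := by
    rw [← Nat.card_coe_set_eq, Nat.card_congr φ.toEquiv]; simp
  have hc : H.vertsᶜ.ncard = 1 := by
    have h := Set.ncard_add_ncard_compl H.verts
    rw [h5] at h
    simp only [Nat.card_eq_fintype_card, Fintype.card_fin] at h
    omega
  obtain ⟨v, hv⟩ := Set.ncard_eq_one.mp hc
  have hverts : H.verts = ({v}ᶜ : Set (Fin 6)) := by rw [← hv, compl_compl]
  refine ⟨v, Subgraph.ext hverts ?_⟩
  funext x y
  rw [eq_iff_iff]
  constructor
  · intro h
    refine ⟨H.adj_sub h, ?_, ?_⟩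
    · have := H.edge_vert h; rw [hverts] at this; exact this
    · have := H.edge_vert h.symm; rw [hverts] at this; exact this
  · rintro ⟨hxy, hxv, hyv⟩
    have hx : x ∈ H.verts := by rw [hverts]; exact hxv
    have hy : y ∈ H.verts := by rw [hverts]; exact hyv
    rw [← Subgraph.coe_adj H ⟨x, hx⟩ ⟨y, hy⟩, ← φ.map_rel_iff]
    exact φ.toEquiv.injective.ne (fun h => hxy (congrArg Subtype.val h))

lemma third_elt {a c : Fin 6} {s : Finset (Fin 6)} (hac : a ≠ c) (hs : s.card = 3)
    (ha : a ∈ s) (hc : c ∈ s) :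
    ∃ x, x ∈ s ∧ x ≠ a ∧ x ≠ c ∧ s = {a, c, x} := by
  have hsub : ({a, c} : Finset (Fin 6)) ⊆ s := by
    intro z hz
    rcases Finset.mem_insert.mp hz with rfl | hz
    · exact ha
    · rcases Finset.mem_singleton.mp hz with rfl
      exact hc
  have hcard2 : ({a, c} : Finset (Fin 6)).card = 2 := by
    rw [Finset.card_insert_of_notMem (by simpa using hac), Finset.card_singleton]
  have h1 : (s \ {a, c}).card = 1 := by
    rw [Finset.card_sdiff_of_subset hsub, hs, hcard2]
  obtain ⟨x, hx⟩ := Finset.card_eq_one.mp h1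
  have hxmem : x ∈ s \ ({a, c} : Finset (Fin 6)) := by rw [hx]; exact Finset.mem_singleton_self x
  have hxs := (Finset.mem_sdiff.mp hxmem).1
  have hxnac := (Finset.mem_sdiff.mp hxmem).2
  refine ⟨x, hxs, fun h => hxnac (by simp [h]), fun h => hxnac (by simp [h]), ?_⟩
  have := Finset.union_sdiff_of_subset hsub
  rw [hx] at this
  rw [← this]
  ext z
  simp only [Finset.mem_union, Finset.mem_insert, Finset.mem_singleton]
  tauto

end K6Aux

open K6Aux in
/-- Every 4-cycle of `K₆` is a subgraph of exactly two of the `K₃,₃` subgraphs of `K₆`,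
and of exactly two of the `K₅` subgraphs of `K₆`. -/
theorem K6_four_cycles_in_two_subgraphs (E : Finset (Sym2 (Fin 6)))
    (hE : IsCycleEdgeSet 6 4 E) :
    Nat.card {H : SimpleGraph.Subgraph (completeGraph (Fin 6)) //
      Nonempty (H.coe ≃g completeBipartiteGraph (Fin 3) (Fin 3)) ∧
      ∀ e ∈ E, e ∈ H.edgeSet} = 2 ∧
    Nat.card {H : SimpleGraph.Subgraph (completeGraph (Fin 6)) //
      Nonempty (H.coe ≃g completeGraph (Fin 5)) ∧
      ∀ e ∈ E, e ∈ H.edgeSet} = 2 := by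
  obtain ⟨-, f, hEf⟩ := hE
  set a := f 0 with hadef
  set b := f 1 with hbdef
  set c := f 2 with hcdef
  set d := f 3 with hddef
  have hab : a ≠ b := f.injective.ne (by decide)
  have hac : a ≠ c := f.injective.ne (by decide)
  have had : a ≠ d := f.injective.ne (by decide)
  have hbc : b ≠ c := f.injective.ne (by decide)
  have hbd : b ≠ d := f.injective.ne (by decide)
  have hcd : c ≠ d := f.injective.ne (by decide)
  have hcompl : ({a, b, c, d}ᶜ : Finset (Fin 6)).card = 2 := by
    rw [Finset.card_compl]
    have h4 : ({a, b, c, d} : Finset (Fin 6)).card = 4 := by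
      rw [Finset.card_insert_of_notMem (by simp [hab, hac, had]),
        Finset.card_insert_of_notMem (by simp [hbc, hbd]),
        Finset.card_insert_of_notMem (by simp [hcd]), Finset.card_singleton]
    rw [h4]
    rfl
  obtain ⟨p, q, hpq, hpqs⟩ := Finset.card_eq_two.mp hcompl
  have hpmem : p ∉ ({a, b, c, d} : Finset (Fin 6)) := by
    rw [← Finset.mem_compl, hpqs]; simp
  have hqmem : q ∉ ({a, b, c, d} : Finset (Fin 6)) := by
    rw [← Finset.mem_compl, hpqs]; simp
  simp only [Finset.mem_insert, Finset.mem_singleton, not_or] at hpmem hqmem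
  obtain ⟨hpa0, hpb0, hpc0, hpd0⟩ := hpmem
  obtain ⟨hqa0, hqb0, hqc0, hqd0⟩ := hqmem
  have hpa : p ≠ a := hpa0
  have hpb : p ≠ b := hpb0
  have hpc : p ≠ c := hpc0
  have hpd : p ≠ d := hpd0
  have hqa : q ≠ a := hqa0
  have hqb : q ≠ b := hqb0
  have hqc : q ≠ c := hqc0
  have hqd : q ≠ d := hqd0
  -- edge condition
  have hEmem : ∀ H : G.Subgraph, (∀ e ∈ E, e ∈ H.edgeSet) ↔
      (H.Adj a b ∧ H.Adj b c ∧ H.Adj c d ∧ H.Adj d a) := by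
    intro H
    subst hEf
    constructor
    · intro h
      refine ⟨?_, ?_, ?_, ?_⟩ <;>
        [exact Subgraph.mem_edgeSet.mp (h _ (Finset.mem_image_of_mem _ (Finset.mem_univ 0)));
         exact Subgraph.mem_edgeSet.mp (h _ (Finset.mem_image_of_mem _ (Finset.mem_univ 1)));
         exact Subgraph.mem_edgeSet.mp (h _ (Finset.mem_image_of_mem _ (Finset.mem_univ 2)));
         exact Subgraph.mem_edgeSet.mp (h _ (Finset.mem_image_of_mem _ (Finset.mem_univ 3)))]
    · rintro ⟨h1, h2, h3, h4⟩ e he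
      simp only [Finset.mem_image, Finset.mem_univ, true_and] at he
      obtain ⟨i, rfl⟩ := he
      fin_cases i
      · exact Subgraph.mem_edgeSet.mpr h1
      · exact Subgraph.mem_edgeSet.mpr h2
      · exact Subgraph.mem_edgeSet.mpr h3
      · exact Subgraph.mem_edgeSet.mpr h4
  constructor
  · -- K₃,₃ case
    have hcard1 : ({a, c, p} : Finset (Fin 6)).card = 3 := by
      rw [Finset.card_insert_of_notMem (by simp [hac, (Ne.symm hpa)]),
        Finset.card_insert_of_notMem (by simp [(Ne.symm hpc)]), Finset.card_singleton]
    have hcard2 : ({a, c, q} : Finset (Fin 6)).card = 3 := by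
      rw [Finset.card_insert_of_notMem (by simp [hac, (Ne.symm hqa)]),
        Finset.card_insert_of_notMem (by simp [(Ne.symm hqc)]), Finset.card_singleton]
    have key : ∀ H : G.Subgraph,
        (Nonempty (H.coe ≃g completeBipartiteGraph (Fin 3) (Fin 3)) ∧
          ∀ e ∈ E, e ∈ H.edgeSet) ↔ H = Bsub {a, c, p} ∨ H = Bsub {a, c, q} := by
      intro H
      constructor
      · rintro ⟨⟨φ⟩, hedge⟩
        obtain ⟨s, hs3, rfl⟩ := bchar H φ
        rw [hEmem] at hedge
        obtain ⟨e1, e2, e3, e4⟩ := hedge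
        -- WLOG a ∈ s
        have main : ∀ t : Finset (Fin 6), t.card = 3 → a ∈ t → b ∉ t → c ∈ t → d ∉ t →
            t = {a, c, p} ∨ t = {a, c, q} := by
          intro t ht hta htb htc htd
          obtain ⟨x, hxs, hxa, hxc, hxeq⟩ := third_elt hac ht hta htc
          have hxbd : x ≠ b ∧ x ≠ d := ⟨fun h => htb (h ▸ hxs), fun h => htd (h ▸ hxs)⟩
          have : x ∈ ({a, b, c, d}ᶜ : Finset (Fin 6)) := by
            rw [Finset.mem_compl]
            simp [hxa, hxbd.1, hxc, hxbd.2]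
          rw [hpqs] at this
          rcases Finset.mem_insert.mp this with rfl | h
          · exact Or.inl hxeq
          · rcases Finset.mem_singleton.mp h with rfl
            exact Or.inr hxeq
        by_cases ha : a ∈ s
        · have hb : b ∉ s := by rcases e1 with ⟨_, h⟩ | ⟨h, _⟩; exacts [h, absurd ha h]
          have hc : c ∈ s := by rcases e2 with ⟨h, _⟩ | ⟨_, h⟩; exacts [absurd h hb, h]
          have hd : d ∉ s := by rcases e3 with ⟨_, h⟩ | ⟨h, _⟩; exacts [h, absurd hc h]
          rcases main s hs3 ha hb hc hd with h | h
          · exact Or.inl (by rw [h])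
          · exact Or.inr (by rw [h])
        · have hb : b ∈ s := by rcases e1 with ⟨h, _⟩ | ⟨_, h⟩; exacts [absurd h ha, h]
          have hc : c ∉ s := by rcases e2 with ⟨_, h⟩ | ⟨h, _⟩; exacts [h, absurd hb h]
          have hd : d ∈ s := by rcases e3 with ⟨h, _⟩ | ⟨_, h⟩; exacts [absurd h hc, h]
          have hsc3 : sᶜ.card = 3 := by rw [Finset.card_compl, hs3]; rfl
          have hac' : a ∈ sᶜ := Finset.mem_compl.mpr ha
          have hbc' : b ∉ sᶜ := by rw [Finset.mem_compl]; simp [hb]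
          have hcc' : c ∈ sᶜ := Finset.mem_compl.mpr hc
          have hdc' : d ∉ sᶜ := by rw [Finset.mem_compl]; simp [hd]
          rcases main sᶜ hsc3 hac' hbc' hcc' hdc' with h | h
          · exact Or.inl (by rw [← bsub_compl, h])
          · exact Or.inr (by rw [← bsub_compl, h])
      · intro h
        have hedges : ∀ t : Finset (Fin 6), a ∈ t → b ∉ t → c ∈ t → d ∉ t →
            ∀ e ∈ E, e ∈ (Bsub t).edgeSet := by
          intro t hta htb htc htd
          rw [hEmem]
          exact ⟨Or.inl ⟨hta, htb⟩, Or.inr ⟨htb, htc⟩, Or.inl ⟨htc, htd⟩, Or.inr ⟨htd, hta⟩⟩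
        rcases h with rfl | rfl
        · exact ⟨bsub_iso _ hcard1, hedges _ (by simp) (by simp [hab.symm, hbc, hpb.symm])
            (by simp) (by simp [had.symm, hcd.symm, hpd.symm])⟩
        · exact ⟨bsub_iso _ hcard2, hedges _ (by simp) (by simp [hab.symm, hbc, hqb.symm])
            (by simp) (by simp [had.symm, hcd.symm, hqd.symm])⟩
    have hne : Bsub {a, c, p} ≠ Bsub {a, c, q} := by
      intro h
      have hAdj2 : (Bsub {a, c, q}).Adj a p :=
        Or.inl ⟨by simp, by simp [hpa, hpc, hpq]⟩
      rw [← h] at hAdj2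
      rcases hAdj2 with ⟨-, hnp⟩ | ⟨hna, -⟩
      · exact hnp (by simp)
      · exact hna (by simp)
    calc Nat.card {H : SimpleGraph.Subgraph (completeGraph (Fin 6)) //
          Nonempty (H.coe ≃g completeBipartiteGraph (Fin 3) (Fin 3)) ∧
          ∀ e ∈ E, e ∈ H.edgeSet}
        = ({Bsub {a, c, p}, Bsub {a, c, q}} : Set G.Subgraph).ncard := by
          rw [← Nat.card_coe_set_eq]
          exact Nat.card_congr (Equiv.subtypeEquivRight (fun H => by
            rw [key H, Set.mem_insert_iff, Set.mem_singleton_iff]))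
      _ = 2 := Set.ncard_pair hne
  · -- K₅ case
    have key : ∀ H : G.Subgraph,
        (Nonempty (H.coe ≃g completeGraph (Fin 5)) ∧
          ∀ e ∈ E, e ∈ H.edgeSet) ↔ H = Csub p ∨ H = Csub q := by
      intro H
      constructor
      · rintro ⟨⟨φ⟩, hedge⟩
        obtain ⟨v, rfl⟩ := cchar H φ
        rw [hEmem] at hedge
        obtain ⟨e1, e2, e3, e4⟩ := hedge
        have hv : v ∈ ({a, b, c, d}ᶜ : Finset (Fin 6)) := by
          rw [Finset.mem_compl]
          simp [Ne.symm e1.2.1, Ne.symm e1.2.2, Ne.symm e2.2.2, Ne.symm e3.2.2]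
        rw [hpqs] at hv
        rcases Finset.mem_insert.mp hv with rfl | h
        · exact Or.inl rfl
        · rcases Finset.mem_singleton.mp h with rfl
          exact Or.inr rfl
      · intro h
        have hedges : ∀ v : Fin 6, v ≠ a → v ≠ b → v ≠ c → v ≠ d →
            ∀ e ∈ E, e ∈ (Csub v).edgeSet := by
          intro v hva hvb hvc hvd
          rw [hEmem]
          exact ⟨⟨hab, Ne.symm hva, Ne.symm hvb⟩, ⟨hbc, Ne.symm hvb, Ne.symm hvc⟩,
            ⟨hcd, Ne.symm hvc, Ne.symm hvd⟩, ⟨(Ne.symm had), Ne.symm hvd, Ne.symm hva⟩⟩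
        rcases h with rfl | rfl
        · exact ⟨csub_iso p, hedges p hpa hpb hpc hpd⟩
        · exact ⟨csub_iso q, hedges q hqa hqb hqc hqd⟩
    have hne : Csub p ≠ Csub q := by
      intro h
      have h2 : (Csub p).verts = (Csub q).verts := by rw [h]
      have : q ∈ (Csub p).verts := by
        simp only [Csub, Set.mem_compl_iff, Set.mem_singleton_iff]
        exact Ne.symm hpq
      rw [h2] at this
      simp [Csub] at this
    calc Nat.card {H : SimpleGraph.Subgraph (completeGraph (Fin 6)) //
          Nonempty (H.coe ≃g completeGraph (Fin 5)) ∧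
          ∀ e ∈ E, e ∈ H.edgeSet}
        = ({Csub p, Csub q} : Set G.Subgraph).ncard := by
          rw [← Nat.card_coe_set_eq]
          exact Nat.card_congr (Equiv.subtypeEquivRight (fun H => by
            rw [key H, Set.mem_insert_iff, Set.mem_singleton_iff]))
      _ = 2 := Set.ncard_pair hne
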